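/- Let n ≥ 0 and let t_0, t_1, …, t_n be arbitrary complex numbers. Then, as an identity of rational functions in z_1, …, z_n, the sum over all sign vectors ε ∈ {±1}^n of ∏_{1≤i≤n} (1 − t_0 z_i^{ε_i})(1 − t_1 z_i^{ε_i}) ⋯ (1 − t_n z_i^{ε_i})/(1 − z_i^{2ε_i}) · ∏_{1≤i<j≤n} 1/(1 − z_i^{ε_i} z_j^{ε_j}) equals ∏_{0≤i<j≤n} (1 − t_i t_j). -/
import Mathlib


open scoped BigOperators
open Finset MeasureTheory

noncomputable section

/-- The infinite q-Pochhammer symbol `(x;q) = ∏_{j ≥ 0} (1 - q^j x)`. -/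
def qPoch (x q : ℂ) : ℂ := ∏' j : ℕ, (1 - q ^ j * x)

/-- The finite q-Pochhammer symbol `(x;q)_k`. -/
def qPochFin (x q : ℂ) (k : ℕ) : ℂ := ∏ j ∈ Finset.range k, (1 - q ^ j * x)

/-- `(a z^{±1}; q) = (a z; q) (a z⁻¹; q)`. -/
def qPochPM (a z q : ℂ) : ℂ := qPoch (a * z) q * qPoch (a * z⁻¹) q

/-- Normalized contour integral over the unit torus:
`∫_{T^n} F(z) ∏_i dz_i / (2 π √-1 z_i)`, parametrized by `z_i = exp(√-1 θ_i)`. -/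
def torusAvg (n : ℕ) (F : (Fin n → ℂ) → ℂ) : ℂ :=
  ((2 * Real.pi : ℂ))⁻¹ ^ n *
    ∫ θ in Set.univ.pi fun _ : Fin n => Set.Ioc (0 : ℝ) (2 * Real.pi),
      F fun i => Complex.exp (Complex.I * (θ i : ℂ))

/-- The cross factor `(z w^{±1};q)(z⁻¹ w^{±1};q) / ((t z w^{±1};q)(t z⁻¹ w^{±1};q))`
appearing in the Koornwinder density. -/
def koornCross (q t z w : ℂ) : ℂ :=
  (qPochPM z w q * qPochPM z⁻¹ w q) / (qPochPM (t * z) w q * qPochPM (t * z⁻¹) w q)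

/-- The Koornwinder density `Δ^{(n)}(z; t₀,t₁,t₂,t₃; q,t)`. -/
def koornWeight (n : ℕ) (t0 t1 t2 t3 q t : ℂ) (z : Fin n → ℂ) : ℂ :=
  (∏ i, (qPoch ((z i) ^ 2) q * qPoch (((z i)⁻¹) ^ 2) q) /
      (qPochPM t0 (z i) q * qPochPM t1 (z i) q * qPochPM t2 (z i) q * qPochPM t3 (z i) q)) *
  ∏ i, ∏ j, if i < j then koornCross q t (z i) (z j) else 1

/-- The (unnormalized) Koornwinder integral `⟨f⟩'^{(n)}_{t₀,t₁,t₂,t₃;q,t}`. -/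
def koornInner' (n : ℕ) (t0 t1 t2 t3 q t : ℂ) (f : (Fin n → ℂ) → ℂ) : ℂ :=
  qPoch q q ^ n / (qPoch t q ^ n * 2 ^ n * (Nat.factorial n : ℂ)) *
    torusAvg n fun z => f z * koornWeight n t0 t1 t2 t3 q t z

/-- The normalized Koornwinder integral `⟨f⟩ = ⟨f⟩'/⟨1⟩'`. -/
def koornInner (n : ℕ) (t0 t1 t2 t3 q t : ℂ) (f : (Fin n → ℂ) → ℂ) : ℂ :=
  koornInner' n t0 t1 t2 t3 q t f / koornInner' n t0 t1 t2 t3 q t fun _ => 1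

/-- A function is a Laurent polynomial in `z₁, …, z_n` on nonzero arguments. -/
def IsLaurent (n : ℕ) (f : (Fin n → ℂ) → ℂ) : Prop :=
  ∃ c : (Fin n → ℤ) →₀ ℂ, ∀ z : Fin n → ℂ, (∀ i, z i ≠ 0) →
    f z = c.sum fun m a => a * ∏ i, z i ^ m i

/-- `BC_n`-symmetric Laurent polynomial: a Laurent polynomial invariant under permutations
of the variables and under each inversion `z_i ↦ z_i⁻¹`. -/
def IsBCSymmetric (n : ℕ) (f : (Fin n → ℂ) → ℂ) : Prop :=
  IsLaurent n f ∧
  (∀ σ : Equiv.Perm (Fin n), ∀ z : Fin n → ℂ, (∀ i, z i ≠ 0) → f (z ∘ σ) = f z) ∧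
  (∀ k : Fin n, ∀ z : Fin n → ℂ, (∀ i, z i ≠ 0) → f (Function.update z k (z k)⁻¹) = f z)

/-- The orbit of an exponent vector under signed permutations. -/
def signedOrbit (n : ℕ) (lam : Fin n → ℤ) : Finset (Fin n → ℤ) :=
  Finset.image
    (fun p : Equiv.Perm (Fin n) × (Fin n → Bool) =>
      fun i => if p.2 i then -lam (p.1 i) else lam (p.1 i))
    Finset.univ

/-- The `BC_n`-symmetric monomial `m_λ`: the orbit sum of `∏ i, z_i^{λ_i}` under the
hyperoctahedral group. -/
def bcMono (n : ℕ) (lam : Fin n → ℤ) (z : Fin n → ℂ) : ℂ :=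
  ∑ μ ∈ signedOrbit n lam, ∏ i, z i ^ μ i

/-- Natural-number exponent vectors coerced to integers. -/
def natToZ {n : ℕ} (lam : Fin n → ℕ) : Fin n → ℤ := fun i => (lam i : ℤ)

/-- `μ` is dominated by `λ`: all partial sums of `μ` are at most those of `λ`. -/
def Dominates {n : ℕ} (lam mu : Fin n → ℤ) : Prop :=
  ∀ k : ℕ, (∑ i ∈ Finset.univ.filter fun i : Fin n => (i : ℕ) < k, mu i)
    ≤ ∑ i ∈ Finset.univ.filter fun i : Fin n => (i : ℕ) < k, lam i

/-- `μ` is strictly dominated by `λ`. -/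
def StrictlyDominated {n : ℕ} (mu lam : Fin n → ℤ) : Prop :=
  Dominates lam mu ∧ mu ≠ lam

/-- A partition with at most `n` parts, recorded as a weakly decreasing vector. -/
def IsPartition {n : ℕ} (lam : Fin n → ℕ) : Prop := Antitone lam

/-- `K` is the Koornwinder polynomial `K^{(n)}_λ(·; t₀,t₁,t₂,t₃; q,t)`: a `BC_n`-symmetric
Laurent polynomial of the form `m_λ` plus a combination of `m_μ` with `μ` strictly dominated
by `λ`, orthogonal to all strictly dominated monomials. -/
def IsKoornwinder (n : ℕ) (t0 t1 t2 t3 q t : ℂ) (lam : Fin n → ℕ)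
    (K : (Fin n → ℂ) → ℂ) : Prop :=
  IsBCSymmetric n K ∧
  (∃ c : (Fin n → ℕ) →₀ ℂ,
    (∀ μ ∈ c.support, IsPartition μ ∧ StrictlyDominated (natToZ μ) (natToZ lam)) ∧
    ∀ z : Fin n → ℂ, (∀ i, z i ≠ 0) →
      K z = bcMono n (natToZ lam) z + c.sum fun μ a => a * bcMono n (natToZ μ) z) ∧
  ∀ μ : Fin n → ℕ, IsPartition μ → StrictlyDominated (natToZ μ) (natToZ lam) →
    koornInner' n t0 t1 t2 t3 q t (fun z => K z * bcMono n (natToZ μ) z) = 0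

/-- The principal specialization point `z_i = t^{n-i} a` (1-indexed). -/
def principalPt (n : ℕ) (t a : ℂ) : Fin n → ℂ := fun i => t ^ (n - 1 - (i : ℕ)) * a

/-- The normalized norm `N^{(n)}_λ` of a (candidate) Koornwinder polynomial. -/
def koornNorm (n : ℕ) (t0 t1 t2 t3 q t : ℂ) (K : (Fin n → ℂ) → ℂ) : ℂ :=
  koornInner n t0 t1 t2 t3 q t (fun z => K z * K z) / (K (principalPt n t t0)) ^ 2

/-- Application of a sign vector: `z_i ↦ z_i⁻¹` where `ε_i` is true. -/
def signFlip {n : ℕ} (ε : Fin n → Bool) (z : Fin n → ℂ) : Fin n → ℂ :=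
  fun i => if ε i then (z i)⁻¹ else z i

/-- The cross factor `∏_{i<j} (1 - t w_i w_j)/(1 - w_i w_j)`. -/
def crossFactor {n : ℕ} (t : ℂ) (w : Fin n → ℂ) : ℂ :=
  ∏ i, ∏ j, if i < j then (1 - t * w i * w j) / (1 - w i * w j) else 1

/-- Nondegeneracy conditions on `z` making all the difference-operator denominators nonzero. -/
def ZGood {n : ℕ} (z : Fin n → ℂ) : Prop :=
  (∀ i, z i ≠ 0) ∧ (∀ i, (z i) ^ 2 ≠ 1) ∧
    ∀ i j : Fin n, i ≠ j → z i * z j ≠ 1 ∧ z i ≠ z j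

/-- The lowering difference operator `D^{-(n)}_q(t)`, with `sq` a square root of `q`. -/
def Dminus (n : ℕ) (sq t : ℂ) (f : (Fin n → ℂ) → ℂ) (z : Fin n → ℂ) : ℂ :=
  ∑ ε : Fin n → Bool,
    (∏ i, signFlip ε z i / (1 - (signFlip ε z i) ^ 2)) *
      crossFactor t (signFlip ε z) * f fun i => sq * signFlip ε z i

/-- The difference operator `D^{(n)}_q(t₀,t₁;t)`, with `sq` a square root of `q`. -/
def Dmid (n : ℕ) (sq t0 t1 t : ℂ) (f : (Fin n → ℂ) → ℂ) (z : Fin n → ℂ) : ℂ :=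
  ∑ ε : Fin n → Bool,
    (∏ i, (1 - t0 * signFlip ε z i) * (1 - t1 * signFlip ε z i) / (1 - (signFlip ε z i) ^ 2)) *
      crossFactor t (signFlip ε z) * f fun i => sq * signFlip ε z i

/-- The raising difference operator `D^{+(n)}_q(t₀,t₁,t₂,t₃;t)`, with `sq` a square root of `q`. -/
def Dplus (n : ℕ) (sq t0 t1 t2 t3 t : ℂ) (f : (Fin n → ℂ) → ℂ) (z : Fin n → ℂ) : ℂ :=
  ∑ ε : Fin n → Bool,
    (∏ i, (1 - t0 * signFlip ε z i) * (1 - t1 * signFlip ε z i) * (1 - t2 * signFlip ε z i) *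
        (1 - t3 * signFlip ε z i) / (signFlip ε z i * (1 - (signFlip ε z i) ^ 2))) *
      crossFactor t (signFlip ε z) * f fun i => sq * signFlip ε z i

/-- The Gustafson-type integrand (without prefactor) with parameters `T_0, …, T_{N-1}`. -/
def gustafsonKernel (n N : ℕ) (q : ℂ) (T : Fin N → ℂ) (z : Fin n → ℂ) : ℂ :=
  (∏ i, ∏ j, if i < j then qPochPM (z i) (z j) q * qPochPM ((z i)⁻¹) (z j) q else 1) *
    ∏ i, (qPoch ((z i) ^ 2) q * qPoch (((z i)⁻¹) ^ 2) q) / ∏ r, qPochPM (T r) (z i) q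

/-- The density `κ(z)` of the integral operator `I^{*(n)}(q)`. -/
def IstarWeight (n N : ℕ) (q : ℂ) (T : Fin N → ℂ) (z : Fin n → ℂ) : ℂ :=
  (∏ r, ∏ s, if r < s then qPoch (T r * T s) q else 1) / qPoch (∏ r, T r) q *
    (qPoch q q ^ n / (2 ^ n * (Nat.factorial n : ℂ))) * gustafsonKernel n N q T z

/-- The integral operator `I^{*(n)}(q)` taking a `BC_n`-symmetric polynomial to a function
of parameters `T_0, …, T_{N-1}` (with `N = 2n+2` in the main case). -/
def Istar (n N : ℕ) (q : ℂ) (f : (Fin n → ℂ) → ℂ) (T : Fin N → ℂ) : ℂ :=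
  torusAvg n fun z => f z * IstarWeight n N q T z

/-- The integral operator `I^{+(n)}_t(q)`, with `st` a square root of `t`. -/
def Iplus (n : ℕ) (st q : ℂ) (f : (Fin n → ℂ) → ℂ) (z : Fin (n + 1) → ℂ) : ℂ :=
  Istar n (2 * n + 2) q f fun r =>
    if h : (r : ℕ) < n + 1 then st * z ⟨r, h⟩
    else st * (z ⟨(r : ℕ) - (n + 1), by have := r.isLt; omega⟩)⁻¹

/-- The integral operator `I^{(n)}_t(t₀,t₁;q)`, with `st` a square root of `t`. -/
def Imid (n : ℕ) (st t0 t1 q : ℂ) (f : (Fin n → ℂ) → ℂ) (z : Fin n → ℂ) : ℂ :=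
  Istar n (2 * n + 2) q f fun r =>
    if h0 : (r : ℕ) = 0 then t0
    else if h1 : (r : ℕ) = 1 then t1
    else if h : (r : ℕ) < n + 2 then st * z ⟨(r : ℕ) - 2, by omega⟩
    else st * (z ⟨(r : ℕ) - (n + 2), by have := r.isLt; omega⟩)⁻¹

/-- The integral operator `I^{-(n+1)}_t(t₀,t₁,t₂,t₃;q)` (input `BC_{n+1}`, output `BC_n`),
with `st` a square root of `t`. -/
def Iminus (n : ℕ) (st t0 t1 t2 t3 q : ℂ) (f : (Fin (n + 1) → ℂ) → ℂ) (z : Fin n → ℂ) : ℂ :=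
  Istar (n + 1) (2 * n + 4) q f fun r =>
    if h0 : (r : ℕ) = 0 then t0
    else if h1 : (r : ℕ) = 1 then t1
    else if h2 : (r : ℕ) = 2 then t2
    else if h3 : (r : ℕ) = 3 then t3
    else if h : (r : ℕ) < n + 4 then st * z ⟨(r : ℕ) - 4, by omega⟩
    else st * (z ⟨(r : ℕ) - (n + 4), by have := r.isLt; omega⟩)⁻¹

/-- The conjugate partition: `conjPart λ i = λ'_i = #{j : λ_j ≥ i}` (for `i ≥ 1`). -/
def conjPart {n : ℕ} (lam : Fin n → ℕ) (i : ℕ) : ℕ :=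
  (Finset.univ.filter fun j : Fin n => i ≤ lam j).card

/-- A partition with at most `n` parts viewed as one with at most `n+1` parts. -/
def padPart {n : ℕ} (lam : Fin n → ℕ) : Fin (n + 1) → ℕ :=
  fun i => if h : (i : ℕ) < n then lam ⟨i, h⟩ else 0

/-- The first `n` parts of a partition with at most `n+1` parts. -/
def truncPart {n : ℕ} (lam : Fin (n + 1) → ℕ) : Fin n → ℕ :=
  fun i => lam i.castSucc

/-- The complementary partition `n^m - λ'` of `λ ⊆ m^n` inside the `m × n` box. -/
def boxCompl {n : ℕ} (m : ℕ) (lam : Fin n → ℕ) : Fin m → ℕ :=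
  fun j => n - conjPart lam (m - (j : ℕ))

/-- The interaction kernel `∏_{i,j} (y_j + y_j⁻¹ - z_i - z_i⁻¹)`. -/
def interactionKernel (n m : ℕ) (z : Fin n → ℂ) (y : Fin m → ℂ) : ℂ :=
  ∏ i : Fin n, ∏ j : Fin m, (y j + (y j)⁻¹ - z i - (z i)⁻¹)

/-- The multivariate q-symbol `C⁰_λ(x;q,t)`. -/
def C0 {n : ℕ} (lam : Fin n → ℕ) (x q t : ℂ) : ℂ :=
  ∏ i : Fin n, qPochFin (t⁻¹ ^ (i : ℕ) * x) q (lam i)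

/-- The multivariate q-symbol `C⁻_λ(x;q,t)`. -/
def Cminus {n : ℕ} (lam : Fin n → ℕ) (x q t : ℂ) : ℂ :=
  ∏ i : Fin n, ∏ j : Fin n, if i ≤ j then
      qPochFin (t ^ ((j : ℕ) - (i : ℕ)) * x) q
          (lam i - (if h : (j : ℕ) + 1 < n then lam ⟨(j : ℕ) + 1, h⟩ else 0)) /
        qPochFin (t ^ ((j : ℕ) - (i : ℕ)) * x) q (lam i - lam j)
    else 1

/-- The multivariate q-symbol `C⁺_λ(x;q,t)`. -/
def Cplus {n : ℕ} (lam : Fin n → ℕ) (x q t : ℂ) : ℂ :=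
  ∏ i : Fin n, ∏ j : Fin n, if i ≤ j then
      qPochFin (t⁻¹ ^ ((i : ℕ) + (j : ℕ)) * x) q (lam i + lam j) /
        qPochFin (t⁻¹ ^ ((i : ℕ) + (j : ℕ)) * x) q
          (lam i + (if h : (j : ℕ) + 1 < n then lam ⟨(j : ℕ) + 1, h⟩ else 0))
    else 1

/-- `n(λ) = ∑ (i-1) λ_i`. -/
def nStat {n : ℕ} (lam : Fin n → ℕ) : ℕ := ∑ i : Fin n, (i : ℕ) * lam i

/-- The symbol `Δ_λ(a | b₁, b₂, b₃, b₄; q, t)`. -/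
def DeltaSym {n : ℕ} (lam : Fin n → ℕ) (a b1 b2 b3 b4 q t : ℂ) : ℂ :=
  ((q * a) ^ 2 / (b1 * b2 * b3 * b4)) ^ (∑ i, lam i) *
    (C0 lam b1 q t * C0 lam b2 q t * C0 lam b3 q t * C0 lam b4 q t) /
    (C0 lam (q * a / b1) q t * C0 lam (q * a / b2) q t * C0 lam (q * a / b3) q t *
      C0 lam (q * a / b4) q t) *
  (t ^ (2 * nStat lam) * (t / (q * a)) ^ (∑ i, lam i) *
      (∏ i : Fin n, qPochFin (t⁻¹ ^ (2 * (i : ℕ)) * (q * a)) q (2 * lam i) *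
        qPochFin (t⁻¹ ^ (2 * (i : ℕ) + 1) * (q * a)) q (2 * lam i)) /
    (Cminus lam q q t * Cminus lam t q t * Cplus lam a q t * Cplus lam (q * a / t) q t))

end
section TypeIProof

private lemma aux_mul_ne_one {a b : ℂ} (ha : a ≠ 0) (hb : b ≠ 0)
    (h1 : a * b ≠ 1) (h2 : a ≠ b) : ∀ bi bj : Bool,
    (if bi then a⁻¹ else a) * (if bj then b⁻¹ else b) ≠ 1
  | false, false => by simpa using h1
  | false, true => by
      show a * b⁻¹ ≠ 1
      intro h
      rw [← div_eq_mul_inv, div_eq_one_iff_eq hb] at h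
      exact h2 h
  | true, false => by
      show a⁻¹ * b ≠ 1
      intro h
      rw [mul_comm, ← div_eq_mul_inv, div_eq_one_iff_eq ha] at h
      exact h2 h.symm
  | true, true => by
      show a⁻¹ * b⁻¹ ≠ 1
      intro h
      rw [← mul_inv, inv_eq_one] at h
      exact h1 h

private lemma aux_sq_ne_one {a : ℂ} (h : a ^ 2 ≠ 1) : ∀ b : Bool,
    (if b then a⁻¹ else a) ^ 2 ≠ 1
  | false => h
  | true => by
      show (a⁻¹) ^ 2 ≠ 1
      intro hh
      rw [inv_pow, inv_eq_one] at hh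
      exact h hh

private lemma ZGood_comp {n : ℕ} {z : Fin (n + 1) → ℂ} (hz : ZGood z) (k : Fin (n + 1)) :
    ZGood (z ∘ k.succAbove) := by
  obtain ⟨h0, h1, h2⟩ := hz
  exact ⟨fun i => h0 _, fun i => h1 _,
    fun i j hij => h2 _ _ fun h => hij (Fin.succAbove_right_injective h)⟩

private lemma cross_split {n : ℕ} (k : Fin (n + 1)) (c : Fin (n + 1) → Fin (n + 1) → ℂ)
    (hsymm : ∀ i j, c i j = c j i) :
    (∏ i, ∏ j, if i < j then c i j else 1)
      = (∏ j, c k (k.succAbove j)) *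
        ∏ i, ∏ j, if i < j then c (k.succAbove i) (k.succAbove j) else 1 := by
  rw [Fin.prod_univ_succAbove (fun i => ∏ j, if i < j then c i j else 1) k]
  have e0 : (∏ j, if k < j then c k j else 1)
      = ∏ j : Fin n, if k < k.succAbove j then c k (k.succAbove j) else 1 := by
    rw [Fin.prod_univ_succAbove (fun j => if k < j then c k j else 1) k,
      if_neg (lt_irrefl k), one_mul]
  have e1 : ∀ i : Fin n, (∏ j, if k.succAbove i < j then c (k.succAbove i) j else 1)
      = (if k.succAbove i < k then c (k.succAbove i) k else 1) *
        ∏ j : Fin n, if k.succAbove i < k.succAbove j then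
          c (k.succAbove i) (k.succAbove j) else 1 :=
    fun i => Fin.prod_univ_succAbove
      (fun j => if k.succAbove i < j then c (k.succAbove i) j else 1) k
  rw [e0, Finset.prod_congr rfl fun i _ => e1 i, Finset.prod_mul_distrib, ← mul_assoc]
  congr 1
  · rw [← Finset.prod_mul_distrib]
    refine Finset.prod_congr rfl fun j _ => ?_
    rcases (Fin.succAbove_ne k j).lt_or_gt with h | h
    · rw [if_neg (asymm h), if_pos h, one_mul, hsymm]
    · rw [if_pos h, if_neg (asymm h), mul_one]
  · refine Finset.prod_congr rfl fun i _ => Finset.prod_congr rfl fun j _ => ?_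
    simp only [Fin.succAbove_lt_succAbove_iff]

private lemma term_identity {n : ℕ} (z : Fin (n + 1) → ℂ) (t' : Fin (n + 1) → ℂ)
    (hz : ZGood z) (k : Fin (n + 1)) (b : Bool) (ε' : Fin n → Bool) :
    ((∏ i, (∏ r, (1 - t' r * signFlip (k.insertNth b ε') z i)) /
        (1 - (signFlip (k.insertNth b ε') z i) ^ 2)) *
      ∏ i, ∏ j, if i < j then
        (1 - signFlip (k.insertNth b ε') z i * signFlip (k.insertNth b ε') z j)⁻¹ else 1) *
      ∏ i, (1 - signFlip (k.insertNth b ε') z i * (if b then (z k)⁻¹ else z k))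
    = (∏ r, (1 - t' r * (if b then (z k)⁻¹ else z k))) *
      ((∏ j, (∏ r, (1 - t' r * signFlip ε' (z ∘ k.succAbove) j)) /
          (1 - (signFlip ε' (z ∘ k.succAbove) j) ^ 2)) *
        ∏ i, ∏ j, if i < j then
          (1 - signFlip ε' (z ∘ k.succAbove) i * signFlip ε' (z ∘ k.succAbove) j)⁻¹ else 1) := by
  obtain ⟨hz0, hzsq, hzpair⟩ := hz
  have hWk : signFlip (k.insertNth b ε') z k = (if b then (z k)⁻¹ else z k) := by
    simp [signFlip]
  have hWs : ∀ j, signFlip (k.insertNth b ε') z (k.succAbove j)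
      = signFlip ε' (z ∘ k.succAbove) j := by
    intro j; simp [signFlip, Fin.insertNth_apply_succAbove]
  have hv2 : (1 : ℂ) - (if b then (z k)⁻¹ else z k) ^ 2 ≠ 0 :=
    sub_ne_zero_of_ne (Ne.symm (aux_sq_ne_one (hzsq k) b))
  have hvW' : ∀ j, (1 : ℂ) - (if b then (z k)⁻¹ else z k) * signFlip ε' (z ∘ k.succAbove) j ≠ 0 := by
    intro j
    refine sub_ne_zero_of_ne (Ne.symm ?_)
    have hne : k ≠ k.succAbove j := Ne.symm (Fin.succAbove_ne k j)
    have : signFlip ε' (z ∘ k.succAbove) j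
        = if ε' j then (z (k.succAbove j))⁻¹ else z (k.succAbove j) := rfl
    rw [this]
    exact aux_mul_ne_one (hz0 k) (hz0 (k.succAbove j))
      (hzpair k (k.succAbove j) hne).1 (hzpair k (k.succAbove j) hne).2 b (ε' j)
  rw [Fin.prod_univ_succAbove
      (fun i => (∏ r, (1 - t' r * signFlip (k.insertNth b ε') z i)) /
        (1 - (signFlip (k.insertNth b ε') z i) ^ 2)) k,
    Fin.prod_univ_succAbove
      (fun i => (1 - signFlip (k.insertNth b ε') z i * (if b then (z k)⁻¹ else z k))) k,
    cross_split k
      (fun i j => (1 - signFlip (k.insertNth b ε') z i * signFlip (k.insertNth b ε') z j)⁻¹)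
      (fun i j => by
        show (1 - signFlip (k.insertNth b ε') z i * signFlip (k.insertNth b ε') z j)⁻¹
            = (1 - signFlip (k.insertNth b ε') z j * signFlip (k.insertNth b ε') z i)⁻¹
        rw [mul_comm])]
  simp only [hWk, hWs]
  set v : ℂ := if b then (z k)⁻¹ else z k with hv
  set X : ℂ := ∏ r, (1 - t' r * v) with hX
  set A : ℂ := ∏ j, (∏ r, (1 - t' r * signFlip ε' (z ∘ k.succAbove) j)) /
      (1 - (signFlip ε' (z ∘ k.succAbove) j) ^ 2) with hA
  set Ci : ℂ := ∏ j, (1 - v * signFlip ε' (z ∘ k.succAbove) j)⁻¹ with hCi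
  set Cr : ℂ := ∏ i, ∏ j, if i < j then
      (1 - signFlip ε' (z ∘ k.succAbove) i * signFlip ε' (z ∘ k.succAbove) j)⁻¹ else 1 with hCr
  set B : ℂ := ∏ j, (1 - signFlip ε' (z ∘ k.succAbove) j * v) with hB
  have hCB : Ci * B = 1 := by
    rw [hCi, hB, ← Finset.prod_mul_distrib]
    exact Finset.prod_eq_one fun j _ => by
      rw [mul_comm (signFlip ε' (z ∘ k.succAbove) j) v]
      exact inv_mul_cancel₀ (hvW' j)
  have hvv : (1 : ℂ) - v * v = 1 - v ^ 2 := by ring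
  rw [hvv]
  have key : X / (1 - v ^ 2) * A * (Ci * Cr) * ((1 - v ^ 2) * B)
      = X * (1 - v ^ 2)⁻¹ * (1 - v ^ 2) * ((Ci * B) * (A * Cr)) := by ring
  rw [key, inv_mul_cancel_right₀ hv2, hCB, one_mul]

private lemma sum_eval {n : ℕ} (z : Fin (n + 1) → ℂ) (t' : Fin (n + 1) → ℂ)
    (hz : ZGood z) (k : Fin (n + 1)) (b : Bool)
    (hIH : (∑ ε : Fin n → Bool,
        (∏ i, (∏ r, (1 - t' r * signFlip ε (z ∘ k.succAbove) i)) /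
            (1 - (signFlip ε (z ∘ k.succAbove) i) ^ 2)) *
          ∏ i, ∏ j, if i < j then
            (1 - signFlip ε (z ∘ k.succAbove) i * signFlip ε (z ∘ k.succAbove) j)⁻¹ else 1)
      = ∏ r, ∏ s, if r < s then 1 - t' r * t' s else 1) :
    (∑ ε : Fin (n + 1) → Bool,
      ((∏ i, (∏ r, (1 - t' r * signFlip ε z i)) / (1 - (signFlip ε z i) ^ 2)) *
          ∏ i, ∏ j, if i < j then (1 - signFlip ε z i * signFlip ε z j)⁻¹ else 1) *
        ∏ i, (1 - signFlip ε z i * (if b then (z k)⁻¹ else z k)))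
    = (∏ r, (1 - t' r * (if b then (z k)⁻¹ else z k))) *
        ∏ r, ∏ s, if r < s then 1 - t' r * t' s else 1 := by
  classical
  obtain ⟨hz0, hzsq, hzpair⟩ := hz
  have hsplit : (∑ ε : Fin (n + 1) → Bool,
      ((∏ i, (∏ r, (1 - t' r * signFlip ε z i)) / (1 - (signFlip ε z i) ^ 2)) *
          ∏ i, ∏ j, if i < j then (1 - signFlip ε z i * signFlip ε z j)⁻¹ else 1) *
        ∏ i, (1 - signFlip ε z i * (if b then (z k)⁻¹ else z k)))
      = (∑ ε' : Fin n → Bool,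
          ((∏ i, (∏ r, (1 - t' r * signFlip (k.insertNth true ε') z i)) /
              (1 - (signFlip (k.insertNth true ε') z i) ^ 2)) *
            ∏ i, ∏ j, if i < j then
              (1 - signFlip (k.insertNth true ε') z i * signFlip (k.insertNth true ε') z j)⁻¹ else 1) *
            ∏ i, (1 - signFlip (k.insertNth true ε') z i * (if b then (z k)⁻¹ else z k))) +
        ∑ ε' : Fin n → Bool,
          ((∏ i, (∏ r, (1 - t' r * signFlip (k.insertNth false ε') z i)) /
              (1 - (signFlip (k.insertNth false ε') z i) ^ 2)) *
            ∏ i, ∏ j, if i < j then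
              (1 - signFlip (k.insertNth false ε') z i * signFlip (k.insertNth false ε') z j)⁻¹ else 1) *
            ∏ i, (1 - signFlip (k.insertNth false ε') z i * (if b then (z k)⁻¹ else z k)) := by
    rw [← Equiv.sum_comp (Fin.insertNthEquiv (fun _ => Bool) k), Fintype.sum_prod_type,
      Fintype.sum_bool]
    rfl
  have hkill : ∀ β : Bool, β ≠ b → ∀ ε' : Fin n → Bool,
      ((∏ i, (∏ r, (1 - t' r * signFlip (k.insertNth β ε') z i)) /
          (1 - (signFlip (k.insertNth β ε') z i) ^ 2)) *
        ∏ i, ∏ j, if i < j then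
          (1 - signFlip (k.insertNth β ε') z i * signFlip (k.insertNth β ε') z j)⁻¹ else 1) *
        ∏ i, (1 - signFlip (k.insertNth β ε') z i * (if b then (z k)⁻¹ else z k)) = 0 := by
    intro β hβ ε'
    have hk : signFlip (k.insertNth β ε') z k = if β then (z k)⁻¹ else z k := by
      simp [signFlip]
    have h1 : signFlip (k.insertNth β ε') z k * (if b then (z k)⁻¹ else z k) = 1 := by
      rw [hk]
      cases β <;> cases b
      · exact absurd rfl hβ
      · simpa using mul_inv_cancel₀ (hz0 k)
      · simpa using inv_mul_cancel₀ (hz0 k)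
      · exact absurd rfl hβ
    have h2 : (∏ i, (1 - signFlip (k.insertNth β ε') z i * (if b then (z k)⁻¹ else z k))) = 0 :=
      Finset.prod_eq_zero (Finset.mem_univ k) (by rw [h1, sub_self])
    rw [h2, mul_zero]
  have hsurv : (∑ ε' : Fin n → Bool,
      ((∏ i, (∏ r, (1 - t' r * signFlip (k.insertNth b ε') z i)) /
          (1 - (signFlip (k.insertNth b ε') z i) ^ 2)) *
        ∏ i, ∏ j, if i < j then
          (1 - signFlip (k.insertNth b ε') z i * signFlip (k.insertNth b ε') z j)⁻¹ else 1) *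
        ∏ i, (1 - signFlip (k.insertNth b ε') z i * (if b then (z k)⁻¹ else z k)))
      = (∏ r, (1 - t' r * (if b then (z k)⁻¹ else z k))) *
          ∏ r, ∏ s, if r < s then 1 - t' r * t' s else 1 := by
    rw [Finset.sum_congr rfl fun ε' _ => term_identity z t' ⟨hz0, hzsq, hzpair⟩ k b ε']
    rw [← Finset.mul_sum, hIH]
  rw [hsplit]
  cases b
  · rw [Finset.sum_eq_zero fun ε' _ => hkill true (by decide) ε', zero_add]
    exact hsurv
  · rw [Finset.sum_eq_zero fun ε' _ => hkill false (by decide) ε', add_zero]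
    exact hsurv

private lemma rhs_split {n : ℕ} (t : Fin (n + 1 + 1) → ℂ) :
    (∏ r : Fin (n + 1 + 1), ∏ s : Fin (n + 1 + 1), if r < s then 1 - t r * t s else 1)
      = (∏ r : Fin (n + 1), ∏ s : Fin (n + 1),
          if r < s then 1 - t r.castSucc * t s.castSucc else 1) *
        ∏ r : Fin (n + 1), (1 - t r.castSucc * t (Fin.last (n + 1))) := by
  rw [Fin.prod_univ_castSucc
    (f := fun r => ∏ s : Fin (n + 1 + 1), if r < s then 1 - t r * t s else 1)]
  have hlast : (∏ s : Fin (n + 1 + 1),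
      if Fin.last (n + 1) < s then 1 - t (Fin.last (n + 1)) * t s else 1) = 1 :=
    Finset.prod_eq_one fun s _ => if_neg (not_lt.mpr (Fin.le_last s))
  rw [hlast, mul_one]
  have step : ∀ r : Fin (n + 1),
      (∏ s : Fin (n + 1 + 1), if r.castSucc < s then 1 - t r.castSucc * t s else 1)
      = (∏ s : Fin (n + 1), if r < s then 1 - t r.castSucc * t s.castSucc else 1) *
        (1 - t r.castSucc * t (Fin.last (n + 1))) := by
    intro r
    rw [Fin.prod_univ_castSucc
      (f := fun s => if r.castSucc < s then 1 - t r.castSucc * t s else 1)]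
    rw [if_pos (Fin.castSucc_lt_last r)]
    congr 1
  rw [Finset.prod_congr rfl fun r _ => step r, Finset.prod_mul_distrib]

end TypeIProof

/-- The type-I analogue of the normalization lemma: for `n ≥ 0` and arbitrary complex
`t₀, …, t_n` (note: `n+1` parameters for `n` variables), as an identity of rational functions,
`∏_i (1+R(z_i)) ∏_i (1-t₀z_i)⋯(1-t_n z_i)/(1-z_i²) ∏_{i<j} 1/(1-z_i z_j)
  = ∏_{0≤i<j≤n} (1 - t_i t_j)`. -/
theorem typeI_lemma (n : ℕ) (t : Fin (n + 1) → ℂ) (z : Fin n → ℂ) (hz : ZGood z) :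
    (∑ ε : Fin n → Bool,
      (∏ i, (∏ r : Fin (n + 1), (1 - t r * signFlip ε z i)) / (1 - (signFlip ε z i) ^ 2)) *
        ∏ i, ∏ j, if i < j then (1 - signFlip ε z i * signFlip ε z j)⁻¹ else 1)
    = ∏ r : Fin (n + 1), ∏ s : Fin (n + 1), if r < s then 1 - t r * t s else 1 := by
  induction n with
  | zero => simp
  | succ n IH =>
    classical
    set t' : Fin (n + 1) → ℂ := fun r => t r.castSucc with ht'def
    have ht'app : ∀ r : Fin (n + 1), t r.castSucc = t' r := fun r => rfl
    set P : Polynomial ℂ :=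
      (∑ ε : Fin (n + 1) → Bool,
        Polynomial.C
          ((∏ i, (∏ r, (1 - t' r * signFlip ε z i)) / (1 - (signFlip ε z i) ^ 2)) *
            ∏ i, ∏ j, if i < j then (1 - signFlip ε z i * signFlip ε z j)⁻¹ else 1) *
          ∏ i, (1 - Polynomial.C (signFlip ε z i) * Polynomial.X)) -
      Polynomial.C (∏ r, ∏ s, if r < s then 1 - t' r * t' s else 1) *
        ∏ r : Fin (n + 1), (1 - Polynomial.C (t' r) * Polynomial.X) with hPdef
    have heval : ∀ x : ℂ, P.eval x =
        (∑ ε : Fin (n + 1) → Bool,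
          ((∏ i, (∏ r, (1 - t' r * signFlip ε z i)) / (1 - (signFlip ε z i) ^ 2)) *
              ∏ i, ∏ j, if i < j then (1 - signFlip ε z i * signFlip ε z j)⁻¹ else 1) *
            ∏ i, (1 - signFlip ε z i * x)) -
        (∏ r, ∏ s, if r < s then 1 - t' r * t' s else 1) *
          ∏ r : Fin (n + 1), (1 - t' r * x) := by
      intro x
      simp only [hPdef, Polynomial.eval_sub, Polynomial.eval_mul, Polynomial.eval_finset_sum,
        Polynomial.eval_prod, Polynomial.eval_C, Polynomial.eval_one, Polynomial.eval_X]
    have hdeg : P.natDegree ≤ n + 1 := by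
      have h1 : ∀ u : ℂ, (1 - Polynomial.C u * Polynomial.X).natDegree ≤ 1 := fun u =>
        (Polynomial.natDegree_sub_le _ _).trans (by
          simp only [Polynomial.natDegree_one]
          exact max_le (Nat.zero_le 1)
            ((Polynomial.natDegree_C_mul_le _ _).trans Polynomial.natDegree_X_le))
      have hprod : ∀ g : Fin (n + 1) → ℂ,
          (∏ i, (1 - Polynomial.C (g i) * Polynomial.X)).natDegree ≤ n + 1 := fun g =>
        (Polynomial.natDegree_prod_le _ _).trans (by
          calc ∑ i : Fin (n + 1), (1 - Polynomial.C (g i) * Polynomial.X).natDegree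
              ≤ ∑ _i : Fin (n + 1), 1 :=
                Finset.sum_le_sum
                  (f := fun i => (1 - Polynomial.C (g i) * Polynomial.X).natDegree)
                  (g := fun _ => (1 : ℕ)) fun i _ => h1 (g i)
            _ = n + 1 := by simp)
      rw [hPdef]
      refine (Polynomial.natDegree_sub_le _ _).trans (max_le ?_ ?_)
      · refine Polynomial.natDegree_sum_le_of_forall_le _ _ fun ε _ => ?_
        refine Polynomial.natDegree_mul_le.trans ?_
        rw [Polynomial.natDegree_C, zero_add]
        exact hprod _
      · refine Polynomial.natDegree_mul_le.trans ?_
        rw [Polynomial.natDegree_C, zero_add]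
        exact hprod _
    have hroot : ∀ p : Fin (n + 1) × Bool, P.eval (if p.2 then (z p.1)⁻¹ else z p.1) = 0 := by
      rintro ⟨k, b⟩
      show P.eval (if b then (z k)⁻¹ else z k) = 0
      rw [heval, sub_eq_zero]
      exact (sum_eval z t' hz k b (IH t' (z ∘ k.succAbove) (ZGood_comp hz k))).trans
        (mul_comm _ _)
    have hinj : Function.Injective
        (fun p : Fin (n + 1) × Bool => if p.2 then (z p.1)⁻¹ else z p.1) := by
      obtain ⟨hz0, hzsq, hzpair⟩ := hz
      rintro ⟨k, b⟩ ⟨k', b'⟩ h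
      have hkk' : k = k' := by
        by_contra hne
        rcases hzpair k k' hne with ⟨hm, hd⟩
        cases b <;> cases b'
        · exact hd h
        · have h2 : z k = (z k')⁻¹ := h
          exact hm (by rw [h2]; exact inv_mul_cancel₀ (hz0 k'))
        · have h2 : (z k)⁻¹ = z k' := h
          exact hm (by rw [← h2]; exact mul_inv_cancel₀ (hz0 k))
        · have h2 : (z k)⁻¹ = (z k')⁻¹ := h
          exact hd (inv_injective h2)
      subst hkk'
      suffices hbb' : b = b' by rw [hbb']
      cases b <;> cases b'
      · rfl
      · have h2 : z k = (z k)⁻¹ := h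
        exact absurd (by rw [sq]; nth_rewrite 1 [h2]; exact inv_mul_cancel₀ (hz0 k)) (hzsq k)
      · have h2 : (z k)⁻¹ = z k := h
        exact absurd (by rw [sq]; nth_rewrite 1 [← h2]; exact inv_mul_cancel₀ (hz0 k)) (hzsq k)
      · rfl
    have hP0 : P = 0 := by
      refine Polynomial.eq_zero_of_natDegree_lt_card_of_eval_eq_zero P hinj hroot ?_
      simp only [Fintype.card_prod, Fintype.card_fin, Fintype.card_bool]
      omega
    have hfin := heval (t (Fin.last (n + 1)))
    rw [hP0, Polynomial.eval_zero] at hfin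
    have hsum := sub_eq_zero.mp hfin.symm
    rw [rhs_split t]
    simp only [ht'app]
    rw [← hsum]
    refine Finset.sum_congr rfl fun ε _ => ?_
    have h1 : ∀ i, (∏ r : Fin (n + 1 + 1), (1 - t r * signFlip ε z i))
        = (∏ r : Fin (n + 1), (1 - t' r * signFlip ε z i)) *
          (1 - signFlip ε z i * t (Fin.last (n + 1))) := by
      intro i
      rw [Fin.prod_univ_castSucc (f := fun r => 1 - t r * signFlip ε z i)]
      simp only [ht'app]
      rw [mul_comm (t (Fin.last (n + 1)))]
    have h2 : (∏ i, (∏ r : Fin (n + 1 + 1), (1 - t r * signFlip ε z i)) /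
          (1 - (signFlip ε z i) ^ 2))
        = (∏ i, (∏ r : Fin (n + 1), (1 - t' r * signFlip ε z i)) /
            (1 - (signFlip ε z i) ^ 2)) *
          ∏ i, (1 - signFlip ε z i * t (Fin.last (n + 1))) := by
      rw [← Finset.prod_mul_distrib]
      exact Finset.prod_congr rfl fun i _ => by rw [h1 i, mul_div_right_comm]
    rw [h2]
    ring
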